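/- arXiv:0805.3853 — 3 statements merged into one kernel-verified Lean document; each statement's English description precedes it below -/
import Mathlib

section
/- For every real increment h, every natural number n, every p ≥ 1, and all real numbers z_1, …, z_p, the generalized multinomial theorem for rising factorials holds: (z_1 + ⋯ + z_p)_{n↑h} = ∑ (n! / (n_1!⋯n_p!)) · ∏_{j=1}^p (z_j)_{n_j↑h}, where the sum ranges over all p-tuples (n_1,…,n_p) of nonnegative integers with n_1 + ⋯ + n_p = n. -/
/-- Generalized rising factorial `(x)_{n↑h} = ∏_{i=0}^{n-1} (x + i·h)`. -/
noncomputable def risefac (x h : ℝ) (n : ℕ) : ℝ := ∏ i ∈ Finset.range n, (x + i * h)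

lemma risefac_succ (x h : ℝ) (n : ℕ) :
    risefac x h (n + 1) = risefac x h n * (x + n * h) :=
  Finset.prod_range_succ _ _

open Finset Finset.Nat in
lemma risefac_add (x y h : ℝ) (n : ℕ) :
    risefac (x + y) h n = ∑ ij ∈ antidiagonal n,
      (n.choose ij.1 : ℝ) * (risefac x h ij.1 * risefac y h ij.2) := by
  induction n with
  | zero => simp [risefac]
  | succ n ih =>
    rw [risefac_succ, ih, Finset.sum_mul,
      sum_antidiagonal_choose_succ_mul
        (fun i j => risefac x h i * risefac y h j) n,
      ← Finset.sum_add_distrib]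
    refine Finset.sum_congr rfl fun ij hij => ?_
    have hs : ij.1 + ij.2 = n := Finset.HasAntidiagonal.mem_antidiagonal.mp hij
    have hcs : (n.choose ij.2 : ℝ) = n.choose ij.1 :=
      by exact_mod_cast congrArg (Nat.cast (R:=ℝ)) (Nat.choose_symm_of_eq_add hs.symm).symm
    rw [hcs, risefac_succ, risefac_succ]
    have : ((ij.1 : ℝ) + ij.2) = n := by exact_mod_cast congrArg (Nat.cast : ℕ → ℝ) hs
    rw [← this]
    ring

open Finset Finset.Nat in
lemma sum_antidiagonalTuple_succ {M : Type*} [AddCommMonoid M] (p n : ℕ)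
    (g : (Fin (p + 1) → ℕ) → M) :
    ∑ f ∈ antidiagonalTuple (p + 1) n, g f =
      ∑ ij ∈ antidiagonal n, ∑ f ∈ antidiagonalTuple p ij.2, g (Fin.cons ij.1 f) := by
  rw [Finset.sum_sigma']
  refine Finset.sum_nbij' (fun f => ⟨(f 0, ∑ i : Fin p, f i.succ), Fin.tail f⟩)
    (fun x => Fin.cons x.1.1 x.2) ?_ ?_ ?_ ?_ ?_
  · intro f hf
    have hs := mem_antidiagonalTuple.mp hf
    simp only [Finset.mem_sigma, Finset.HasAntidiagonal.mem_antidiagonal, mem_antidiagonalTuple]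
    constructor
    · rw [← hs, Fin.sum_univ_succ]
    · rfl
  · intro x hx
    simp only [Finset.mem_sigma, Finset.HasAntidiagonal.mem_antidiagonal, mem_antidiagonalTuple] at hx ⊢
    rw [Fin.sum_univ_succ]
    simp [Fin.cons, hx.2, hx.1]
  · intro f hf; exact Fin.cons_self_tail f
  · intro x hx
    simp only [Finset.mem_sigma, Finset.HasAntidiagonal.mem_antidiagonal, mem_antidiagonalTuple] at hx
    refine Sigma.ext ?_ ?_
    · simp [Fin.tail, hx.2]
    · simp [Fin.tail]
  · intro f hf; rw [Fin.cons_self_tail]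


/-- Generalized multinomial theorem for rising factorials:
`(z_1 + ⋯ + z_p)_{n↑h} = ∑ (n! / (n_1!⋯n_p!)) ∏_j (z_j)_{n_j↑h}`,
the sum over nonnegative tuples with `n_1 + ⋯ + n_p = n`. -/
theorem risefac_multinomial (h : ℝ) (n p : ℕ) (hp : 1 ≤ p) (z : Fin p → ℝ) :
    risefac (∑ j, z j) h n =
      ∑ f ∈ Finset.Nat.antidiagonalTuple p n,
        ((n.factorial : ℝ) / ∏ j, ((f j).factorial : ℝ)) * ∏ j, risefac (z j) h (f j) := by
  clear hp
  induction p generalizing n with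
  | zero =>
    cases n with
    | zero => simp [risefac]
    | succ n =>
      rw [Finset.Nat.antidiagonalTuple_zero_succ, Finset.sum_empty]
      have : (∑ j : Fin 0, z j) = 0 := by simp
      rw [this, risefac]
      exact Finset.prod_eq_zero (Finset.mem_range.mpr (Nat.succ_pos n)) (by simp)
  | succ p ih =>
    rw [Fin.sum_univ_succ, risefac_add, sum_antidiagonalTuple_succ p n]
    refine Finset.sum_congr rfl fun ij hij => ?_
    have hs : ij.1 + ij.2 = n := Finset.HasAntidiagonal.mem_antidiagonal.mp hij
    rw [ih ij.2 (fun j => z j.succ), Finset.mul_sum, Finset.mul_sum]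
    refine Finset.sum_congr rfl fun f hf => ?_
    rw [Fin.prod_univ_succ, Fin.prod_univ_succ]
    simp only [Fin.cons_zero, Fin.cons_succ]
    have h1 : (0:ℝ) < (ij.1.factorial : ℝ) := by exact_mod_cast ij.1.factorial_pos
    have h2 : (0:ℝ) < (ij.2.factorial : ℝ) := by exact_mod_cast ij.2.factorial_pos
    have hc : (n.choose ij.1 : ℝ) =
        (n.factorial : ℝ) / ((ij.1.factorial : ℝ) * (ij.2.factorial : ℝ)) := by
      rw [Nat.cast_choose ℝ (hs ▸ Nat.le_add_right ij.1 ij.2)]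
      congr 2
      rw [← hs]; simp
    rw [hc]
    field_simp
end

section
/- For every function w : ℕ → ℝ and all integers 1 ≤ k ≤ n, the (n,k)-th partial Bell polynomial equals the corresponding sum over compositions: ∑_{{A_1,…,A_k}} ∏_{i=1}^k w(|A_i|) = (n!/k!) · ∑_{(n_1,…,n_k)} ∏_{i=1}^k w(n_i)/n_i!, where the left sum ranges over all partitions of the set {1,…,n} into k nonempty blocks and the right sum ranges over all k-tuples (n_1,…,n_k) of positive integers with n_1 + ⋯ + n_k = n. -/
/-- `P` is a partition of `{1,…,n}` (modeled as `Fin n`) into nonempty blocks: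
no empty block, pairwise disjoint blocks, and the union of the blocks is everything. -/
def isSetPartition {n : ℕ} (P : Finset (Finset (Fin n))) : Prop :=
  ∅ ∉ P ∧ (∀ A ∈ P, ∀ B ∈ P, A ≠ B → Disjoint A B) ∧ P.sup id = Finset.univ

instance {n : ℕ} (P : Finset (Finset (Fin n))) : Decidable (isSetPartition P) := by
  unfold isSetPartition; infer_instance

/-- The partitions of `{1,…,n}` into exactly `k` (nonempty) blocks. -/
def partitionsK (n k : ℕ) : Finset (Finset (Finset (Fin n))) :=
  Finset.univ.filter (fun P => isSetPartition P ∧ P.card = k)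

open Finset

lemma card_sigma_fst {k : ℕ} (f : Fin k → ℕ) (i : Fin k) :
    Fintype.card {s : (j : Fin k) × Fin (f j) // s.1 = i} = f i := by
  have e : Fin (f i) ≃ {s : (j : Fin k) × Fin (f j) // s.1 = i} := by
    refine Equiv.ofBijective (fun j => ⟨⟨i, j⟩, rfl⟩) ⟨?_, ?_⟩
    · intro a b hab
      simpa using hab
    · rintro ⟨⟨i', j⟩, (h : i' = i)⟩
      subst h
      exact ⟨j, rfl⟩
  rw [← Fintype.card_congr e, Fintype.card_fin]

lemma count_fiber_sizes {n k : ℕ} (f : Fin k → ℕ) (hf : ∑ i, f i = n) :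
    ((univ.filter fun g : Fin n → Fin k =>
        ∀ i, (univ.filter fun x => g x = i).card = f i).card) * ∏ i, (f i).factorial
      = n.factorial := by
  classical
  set β := (j : Fin k) × Fin (f j) with hβ
  have hcardβ : Fintype.card β = n := by simp [hβ, hf]
  have htot : Fintype.card (β ≃ Fin n) = n.factorial := by
    rw [Fintype.card_equiv (Fintype.equivOfCardEq (by simp [hcardβ])), hcardβ]
  set Ψ : (β ≃ Fin n) → (Fin n → Fin k) := fun e x => (e.symm x).1 with hΨ
  have hmaps : ∀ e : β ≃ Fin n, ∀ i, (univ.filter fun x => Ψ e x = i).card = f i := by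
    intro e i
    rw [← Fintype.card_subtype]
    rw [Fintype.card_congr ((e.symm.subtypeEquiv (fun x => Iff.rfl)) :
      {x : Fin n // (e.symm x).1 = i} ≃ {s : β // s.1 = i})]
    exact card_sigma_fst f i
  have hfiber : ∀ g ∈ (univ.filter fun g : Fin n → Fin k =>
        ∀ i, (univ.filter fun x => g x = i).card = f i),
      ((univ.filter fun e : β ≃ Fin n => Ψ e = g).card) = ∏ i, (f i).factorial := by
    intro g hg
    simp only [mem_filter, mem_univ, true_and] at hg
    rw [← Fintype.card_subtype]
    have key : ((i : Fin k) → (Fin (f i) ≃ {x : Fin n // g x = i})) ≃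
        {e : β ≃ Fin n // Ψ e = g} := by
      refine Equiv.ofBijective
        (fun F => ⟨(Equiv.sigmaCongrRight F).trans (Equiv.sigmaFiberEquiv g), ?_⟩) ⟨?_, ?_⟩
      · funext x
        simp [hΨ, Equiv.sigmaFiberEquiv, Equiv.sigmaCongrRight]
      · intro F F' h
        have h2 : (Equiv.sigmaCongrRight F).trans (Equiv.sigmaFiberEquiv g)
            = (Equiv.sigmaCongrRight F').trans (Equiv.sigmaFiberEquiv g) :=
          congrArg Subtype.val h
        funext i
        apply Equiv.ext
        intro j
        apply Subtype.ext
        have := congrArg (fun e : β ≃ Fin n => e ⟨i, j⟩) h2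
        simp [Equiv.sigmaFiberEquiv] at this
        exact this
      · rintro ⟨e, he⟩
        have he' : ∀ x, (e.symm x).1 = g x := fun x => congrFun he x
        have hmem : ∀ i (j : Fin (f i)), g (e ⟨i, j⟩) = i := by
          intro i j
          rw [← he' (e ⟨i, j⟩)]
          simp
        refine ⟨fun i => Equiv.ofBijective (fun j => ⟨e ⟨i, j⟩, hmem i j⟩) ⟨?_, ?_⟩, ?_⟩
        · intro a b hab
          have h3 : e ⟨i, a⟩ = e ⟨i, b⟩ := congrArg Subtype.val hab
          have h4 := e.injective h3
          exact eq_of_heq (Sigma.mk.inj_iff.mp h4).2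
        · rintro ⟨x, hx⟩
          have h1 : (e.symm x).1 = i := (he' x).trans hx
          rcases hs : e.symm x with ⟨i', j⟩
          rw [hs] at h1
          subst h1
          refine ⟨j, ?_⟩
          apply Subtype.ext
          show e ⟨i', j⟩ = x
          rw [← hs, Equiv.apply_symm_apply]
        · apply Subtype.ext
          apply Equiv.ext
          rintro ⟨i, j⟩
          simp [Equiv.sigmaFiberEquiv, Equiv.sigmaCongrRight, Equiv.ofBijective]
    rw [Fintype.card_congr key.symm, Fintype.card_pi]
    apply Finset.prod_congr rfl
    intro i _
    have hcf : Fintype.card {x : Fin n // g x = i} = f i := by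
      rw [Fintype.card_subtype]; exact hg i
    rw [Fintype.card_equiv (Fintype.equivOfCardEq (by simp [hcf]))]
    simp
  have hcount := Finset.card_eq_sum_card_fiberwise (f := Ψ) (s := univ)
    (t := univ.filter fun g : Fin n → Fin k =>
      ∀ i, (univ.filter fun x => g x = i).card = f i)
    (fun e _ => by simp only [Finset.mem_coe, mem_filter, mem_univ, true_and]; exact hmaps e)
  rw [Finset.sum_congr rfl hfiber, Finset.sum_const, smul_eq_mul, Finset.card_univ, htot]
    at hcount
  exact hcount.symm

lemma fib_injective {n k : ℕ} {g : Fin n → Fin k} (hs : Function.Surjective g) :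
    Function.Injective (fun i => univ.filter fun x => g x = i) := by
  intro i i' h
  obtain ⟨x, hx⟩ := hs i
  have hmem : x ∈ univ.filter fun y => g y = i := by simp [hx]
  have h' : (univ.filter fun y => g y = i) = (univ.filter fun y => g y = i') := h
  rw [h'] at hmem
  simp only [mem_filter, mem_univ, true_and] at hmem
  rw [← hx, hmem]

lemma count_labelings {n k : ℕ} (P : Finset (Finset (Fin n))) (hP : isSetPartition P)
    (hcard : P.card = k) :
    (univ.filter fun g : Fin n → Fin k =>
        Function.Surjective g ∧ (univ.image fun i => univ.filter fun x => g x = i) = P).card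
      = k.factorial := by
  classical
  obtain ⟨hne, hdisj, hsup⟩ := hP
  have hexu : ∀ x : Fin n, ∃! A, A ∈ P ∧ x ∈ A := by
    intro x
    have hx : x ∈ P.sup id := hsup ▸ mem_univ x
    rw [Finset.mem_sup] at hx
    obtain ⟨A, hA, hxA⟩ := hx
    refine ⟨A, ⟨hA, hxA⟩, ?_⟩
    rintro B ⟨hB, hxB⟩
    by_contra hBA
    exact (Finset.disjoint_left.mp (hdisj B hB A hA hBA)) hxB hxA
  rw [← Fintype.card_subtype]
  have key : {g : Fin n → Fin k // Function.Surjective g ∧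
      (univ.image fun i => univ.filter fun x => g x = i) = P} ≃ (Fin k ≃ {A // A ∈ P}) := by
    refine Equiv.ofBijective (fun g => Equiv.ofBijective
      (fun i => (⟨univ.filter fun x => g.1 x = i, by
          have hm := mem_image_of_mem (fun i => univ.filter fun x => g.1 x = i) (mem_univ i)
          rw [g.2.2] at hm; exact hm⟩ : {A // A ∈ P}))
      ⟨fun i i' h => fib_injective g.2.1 (congrArg Subtype.val h), fun A => by
        have hA : A.1 ∈ univ.image fun i => univ.filter fun x => g.1 x = i := by
          rw [g.2.2]; exact A.2
        simp only [mem_image, mem_univ, true_and] at hA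
        obtain ⟨i, hi⟩ := hA
        exact ⟨i, Subtype.ext hi⟩⟩) ⟨?_, ?_⟩
    · intro g g' h
      apply Subtype.ext
      funext x
      have hx : ∀ i, (univ.filter fun y => g.1 y = i) = (univ.filter fun y => g'.1 y = i) := by
        intro i
        exact congrArg (fun e : Fin k ≃ {A // A ∈ P} => (e i).val) h
      have hx1 : x ∈ univ.filter fun y => g.1 y = g.1 x := by simp
      rw [hx (g.1 x)] at hx1
      simp only [mem_filter, mem_univ, true_and] at hx1
      exact hx1.symm
    · intro e
      have hblkmem : ∀ x, P.choose _ (hexu x) ∈ P := fun x => (P.choose_spec _ (hexu x)).1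
      have hblkx : ∀ x, x ∈ P.choose _ (hexu x) := fun x => (P.choose_spec _ (hexu x)).2
      have hblkuniq : ∀ (x : Fin n) (A), A ∈ P → x ∈ A → P.choose _ (hexu x) = A := by
        intro x A hA hxA
        exact ExistsUnique.unique (hexu x) ⟨hblkmem x, hblkx x⟩ ⟨hA, hxA⟩
      set g : Fin n → Fin k := fun x => e.symm ⟨P.choose _ (hexu x), hblkmem x⟩ with hg
      have hfib : ∀ i, (univ.filter fun x => g x = i) = (e i).val := by
        intro i
        ext x
        simp only [mem_filter, mem_univ, true_and, hg]
        constructor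
        · intro h
          have h2 : (⟨P.choose _ (hexu x), hblkmem x⟩ : {A // A ∈ P}) = e i := by
            rw [← h]; simp
          have hb : P.choose _ (hexu x) = (e i).val := congrArg Subtype.val h2
          rw [← hb]; exact hblkx x
        · intro hx
          have hb : P.choose _ (hexu x) = (e i).val := hblkuniq x _ (e i).2 hx
          rw [show (⟨P.choose _ (hexu x), hblkmem x⟩ : {A // A ∈ P}) = e i from
            Subtype.ext hb]
          simp
      have hsurjg : Function.Surjective g := by
        intro i
        have hne' : ((e i).val : Finset (Fin n)).Nonempty := by
          rw [Finset.nonempty_iff_ne_empty]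
          intro hc
          exact hne (hc ▸ (e i).2)
        obtain ⟨x, hx⟩ := hne'
        refine ⟨x, ?_⟩
        have hmem : x ∈ univ.filter fun y => g y = i := by rw [hfib i]; exact hx
        simpa using hmem
      have himg : (univ.image fun i => univ.filter fun x => g x = i) = P := by
        ext A
        simp only [mem_image, mem_univ, true_and]
        constructor
        · rintro ⟨i, rfl⟩
          rw [hfib i]; exact (e i).2
        · intro hA
          exact ⟨e.symm ⟨A, hA⟩, by rw [hfib]; simp⟩
      refine ⟨⟨g, hsurjg, himg⟩, ?_⟩
      apply Equiv.ext
      intro i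
      apply Subtype.ext
      exact hfib i
  rw [Fintype.card_congr key,
    Fintype.card_equiv (Fintype.equivOfCardEq (α := Fin k) (by simp [Fintype.card_coe, hcard]))]
  simp

/-- The `(n,k)`-th partial Bell polynomial as a sum over set partitions equals the
corresponding sum over compositions. -/
theorem bell_polynomial_eq_composition_sum (w : ℕ → ℝ) (n k : ℕ) (hk : 1 ≤ k) (hn : k ≤ n) :
    ∑ P ∈ partitionsK n k, ∏ A ∈ P, w A.card
      = ((n.factorial : ℝ) / k.factorial) *
          ∑ f ∈ (Finset.Nat.antidiagonalTuple k n).filter (fun f => ∀ i, 0 < f i),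
            ∏ i, w (f i) / (f i).factorial := by
  classical
  set T := (Finset.Nat.antidiagonalTuple k n).filter (fun f => ∀ i, 0 < f i) with hT
  set S : Finset (Fin n → Fin k) := univ.filter (fun g => Function.Surjective g) with hS
  set blocks : (Fin n → Fin k) → Finset (Finset (Fin n)) :=
    fun g => univ.image fun i => univ.filter fun x => g x = i with hblocks
  have hsum_fib : ∀ g : Fin n → Fin k, ∑ i, (univ.filter fun x => g x = i).card = n := by
    intro g
    have h := Finset.card_eq_sum_card_fiberwise (f := g) (s := univ) (t := univ)
      (fun x _ => mem_univ _)
    simpa using h.symm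
  have hmapsA : ∀ g ∈ S, blocks g ∈ partitionsK n k := by
    intro g hg
    simp only [hS, mem_filter, mem_univ, true_and] at hg
    have hinj := fib_injective hg
    simp only [partitionsK, mem_filter, mem_univ, true_and]
    refine ⟨⟨?_, ?_, ?_⟩, ?_⟩
    · simp only [hblocks, mem_image, mem_univ, true_and, not_exists]
      intro i hi
      obtain ⟨x, hx⟩ := hg i
      have hx2 : x ∈ univ.filter fun y => g y = i := by simp [hx]
      rw [hi] at hx2
      simp at hx2
    · intro A hA B hB hAB
      simp only [hblocks, mem_image, mem_univ, true_and] at hA hB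
      obtain ⟨i, rfl⟩ := hA
      obtain ⟨i', rfl⟩ := hB
      have hii' : i ≠ i' := fun h => hAB (by rw [h])
      rw [Finset.disjoint_left]
      intro x hx hx'
      simp only [mem_filter, mem_univ, true_and] at hx hx'
      exact hii' (by rw [← hx, hx'])
    · rw [Finset.eq_univ_iff_forall]
      intro x
      rw [Finset.mem_sup]
      exact ⟨_, mem_image_of_mem _ (mem_univ (g x)), by simp⟩
    · simp only [hblocks]
      rw [Finset.card_image_of_injective _ hinj, card_univ, Fintype.card_fin]
  have hmapsB : ∀ g ∈ S, (fun i => (univ.filter fun x => g x = i).card) ∈ T := by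
    intro g hg
    simp only [hS, mem_filter, mem_univ, true_and] at hg
    simp only [hT, mem_filter, Finset.Nat.mem_antidiagonalTuple]
    refine ⟨hsum_fib g, ?_⟩
    intro i
    rw [Finset.card_pos]
    obtain ⟨x, hx⟩ := hg i
    exact ⟨x, by simp [hx]⟩
  have stepA : ∑ g ∈ S, ∏ i : Fin k, w ((univ.filter fun x => g x = i).card)
      = (k.factorial : ℝ) * ∑ P ∈ partitionsK n k, ∏ A ∈ P, w A.card := by
    rw [← Finset.sum_fiberwise_of_maps_to hmapsA, Finset.mul_sum]
    apply Finset.sum_congr rfl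
    intro P hP
    simp only [partitionsK, mem_filter, mem_univ, true_and] at hP
    have hval : ∀ g ∈ S.filter (fun g => blocks g = P),
        ∏ i : Fin k, w ((univ.filter fun x => g x = i).card) = ∏ A ∈ P, w A.card := by
      intro g hg
      simp only [mem_filter, hS, mem_univ, true_and] at hg
      rw [← hg.2, hblocks, Finset.prod_image (fun i _ i' _ h => fib_injective hg.1 h)]
    rw [Finset.sum_congr rfl hval, Finset.sum_const, nsmul_eq_mul]
    have hfe : S.filter (fun g => blocks g = P) = univ.filter fun g : Fin n → Fin k =>
        Function.Surjective g ∧ (univ.image fun i => univ.filter fun x => g x = i) = P := by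
      rw [hS, Finset.filter_filter]
    rw [hfe, count_labelings P hP.1 hP.2]
  have stepB : ∑ g ∈ S, ∏ i : Fin k, w ((univ.filter fun x => g x = i).card)
      = ∑ f ∈ T, ((univ.filter fun g : Fin n → Fin k =>
            ∀ i, (univ.filter fun x => g x = i).card = f i).card : ℝ) * ∏ i, w (f i) := by
    rw [← Finset.sum_fiberwise_of_maps_to hmapsB]
    apply Finset.sum_congr rfl
    intro f hf
    have hval : ∀ g ∈ S.filter (fun g => (fun i => (univ.filter fun x => g x = i).card) = f),
        ∏ i : Fin k, w ((univ.filter fun x => g x = i).card) = ∏ i, w (f i) := by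
      intro g hg
      simp only [mem_filter] at hg
      exact Finset.prod_congr rfl fun i _ => by rw [congrFun hg.2 i]
    rw [Finset.sum_congr rfl hval, Finset.sum_const, nsmul_eq_mul]
    have hfe : S.filter (fun g => (fun i => (univ.filter fun x => g x = i).card) = f)
        = univ.filter fun g : Fin n → Fin k =>
            ∀ i, (univ.filter fun x => g x = i).card = f i := by
      simp only [hT, mem_filter, Finset.Nat.mem_antidiagonalTuple] at hf
      ext g
      simp only [hS, Finset.filter_filter, mem_filter, mem_univ, true_and]
      constructor
      · rintro ⟨hsurj, hsz⟩
        exact fun i => congrFun hsz i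
      · intro h
        refine ⟨?_, funext h⟩
        intro i
        have hpos : 0 < (univ.filter fun x => g x = i).card := (h i).symm ▸ hf.2 i
        rw [Finset.card_pos] at hpos
        obtain ⟨x, hx⟩ := hpos
        simp only [mem_filter, mem_univ, true_and] at hx
        exact ⟨x, hx⟩
    rw [hfe]
  have hkne : (k.factorial : ℝ) ≠ 0 := Nat.cast_ne_zero.mpr k.factorial_ne_zero
  apply mul_left_cancel₀ hkne
  rw [← stepA, stepB]
  have hmul : ∀ X : ℝ, (k.factorial : ℝ) * ((n.factorial : ℝ) / k.factorial * X)
      = (n.factorial : ℝ) * X := by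
    intro X; field_simp
  rw [hmul, Finset.mul_sum]
  apply Finset.sum_congr rfl
  intro f hf
  simp only [hT, mem_filter, Finset.Nat.mem_antidiagonalTuple] at hf
  have hNf := count_fiber_sizes f hf.1
  have hcast : ((univ.filter fun g : Fin n → Fin k =>
      ∀ i, (univ.filter fun x => g x = i).card = f i).card : ℝ) * ∏ i, ((f i).factorial : ℝ)
      = n.factorial := by exact_mod_cast congrArg (Nat.cast : ℕ → ℝ) hNf
  have hprodne : (∏ i, ((f i).factorial : ℝ)) ≠ 0 := by positivity
  rw [Finset.prod_div_distrib]
  field_simp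
  rw [← hcast]
  ring
end

section
/- Let α ∈ (0,1) and θ > −α be real, let V(n,k) := (θ+α)_{k−1↑α}/(θ+1)_{n−1↑} be the two-parameter Poisson–Dirichlet Gibbs weights, let n ≥ k ≥ 1 be integers, and let 0 ≤ s ≤ m. Then (1/V(n,k)) · binom(m,s) · (n − kα)_{m−s↑} · ∑_{k*=0}^{s} V(n+m, k+k*) · S_{s,k*}^{-1,-α} = binom(m,s) · (n − kα)_{m−s↑} · (θ + kα)_{s↑} / (θ + n)_{m↑}. -/
/-- Generalized Stirling number `S_{n,k}^{-1,-α} = (n!/k!) ∑ ∏_j (1-α)_{n_j-1↑}/n_j!`,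
the sum over positive tuples `(n_1,…,n_k)` with sum `n`. -/
noncomputable def genStirling (α : ℝ) (n k : ℕ) : ℝ :=
  ((n.factorial : ℝ) / k.factorial) *
    ∑ f ∈ (Finset.Nat.antidiagonalTuple k n).filter (fun f => ∀ i, 0 < f i),
      ∏ j, risefac (1 - α) 1 (f j - 1) / (f j).factorial

/-- The two-parameter Poisson–Dirichlet Gibbs weights
`V(n,k) = (θ+α)_{k−1↑α} / (θ+1)_{n−1↑}`. -/
noncomputable def pdV (α θ : ℝ) (n k : ℕ) : ℝ :=
  risefac (θ + α) α (k - 1) / risefac (θ + 1) 1 (n - 1)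

section Auxiliary

lemma risefac_zero (x h : ℝ) : risefac x h 0 = 1 := by simp [risefac]

lemma risefac_add_s18 (x h : ℝ) (a b : ℕ) :
    risefac x h (a + b) = risefac x h a * risefac (x + a * h) h b := by
  simp only [risefac, Finset.prod_range_add]
  congr 1
  refine Finset.prod_congr rfl fun i _ => ?_
  push_cast; ring

lemma risefac_pos {x h : ℝ} (hx : 0 < x) (hh : 0 ≤ h) (n : ℕ) : 0 < risefac x h n := by
  refine Finset.prod_pos fun i _ => ?_
  positivity

/-- The set of positive `k`-tuples summing to `n`. -/
def comps (k n : ℕ) : Finset (Fin k → ℕ) :=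
  (Finset.Nat.antidiagonalTuple k n).filter (fun f => ∀ i, 0 < f i)

lemma mem_comps {k n : ℕ} {f : Fin k → ℕ} :
    f ∈ comps k n ↔ (∑ i, f i) = n ∧ ∀ i, 0 < f i := by
  simp [comps, Finset.Nat.mem_antidiagonalTuple]

noncomputable def wgt (α : ℝ) (m : ℕ) : ℝ := risefac (1 - α) 1 (m - 1) / m.factorial

noncomputable def Aa (α : ℝ) (n k : ℕ) : ℝ := ∑ f ∈ comps k n, ∏ j, wgt α (f j)

noncomputable def Bb (α : ℝ) (n k : ℕ) : ℝ :=
  ∑ f ∈ comps (k + 1) n, (f 0 : ℝ) * ∏ j, wgt α (f j)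

lemma genStirling_eq (α : ℝ) (n k : ℕ) :
    genStirling α n k = ((n.factorial : ℝ) / k.factorial) * Aa α n k := rfl

lemma wgt_one (α : ℝ) : wgt α 1 = 1 := by simp [wgt, risefac_zero]

lemma wgt_succ (α : ℝ) {a : ℕ} (ha : 1 ≤ a) :
    ((a + 1 : ℕ) : ℝ) * wgt α (a + 1) = ((a : ℝ) - α) * wgt α a := by
  obtain ⟨b, rfl⟩ := Nat.exists_eq_add_of_le ha
  simp only [wgt, Nat.add_sub_cancel, Nat.succ_sub_one]
  rw [show 1 + b = b + 1 by ring, risefac_succ]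
  rw [Nat.factorial_succ (b + 1)]
  push_cast
  field_simp
  ring

lemma sum_coord (α : ℝ) (n k : ℕ) (j : Fin (k + 1)) :
    ∑ f ∈ comps (k + 1) n, (f j : ℝ) * ∏ i, wgt α (f i) = Bb α n k := by
  rw [Bb]
  refine Finset.sum_nbij' (i := fun f => f ∘ Equiv.swap 0 j) (j := fun f => f ∘ Equiv.swap 0 j)
    ?_ ?_ ?_ ?_ ?_
  · intro f hf
    rw [mem_comps] at hf ⊢
    exact ⟨by rw [← hf.1]; exact Fintype.sum_equiv (Equiv.swap 0 j) _ _ fun i => rfl,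
      fun i => hf.2 _⟩
  · intro f hf
    rw [mem_comps] at hf ⊢
    exact ⟨by rw [← hf.1]; exact Fintype.sum_equiv (Equiv.swap 0 j) _ _ fun i => rfl,
      fun i => hf.2 _⟩
  · intro f _; funext x; simp [Equiv.swap_apply_self]
  · intro f _; funext x; simp [Equiv.swap_apply_self]
  · intro f _
    simp only [Function.comp_apply, Equiv.swap_apply_left]
    congr 1
    exact (Fintype.prod_equiv (Equiv.swap 0 j) _ _ fun i => rfl).symm

lemma A_eq_B (α : ℝ) (n k : ℕ) :
    (n : ℝ) * Aa α n (k + 1) = ((k : ℝ) + 1) * Bb α n k := by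
  have : (n : ℝ) * Aa α n (k + 1)
      = ∑ f ∈ comps (k + 1) n, ∑ i : Fin (k + 1), (f i : ℝ) * ∏ j, wgt α (f j) := by
    rw [Aa, Finset.mul_sum]
    refine Finset.sum_congr rfl fun f hf => ?_
    rw [← Finset.sum_mul]
    congr 1
    rw [← Nat.cast_sum, (mem_comps.1 hf).1]
  rw [this, Finset.sum_comm]
  have : ∀ i : Fin (k + 1),
      ∑ f ∈ comps (k + 1) n, (f i : ℝ) * ∏ j, wgt α (f j) = Bb α n k :=
    fun i => sum_coord α n k i
  rw [Finset.sum_congr rfl fun i _ => this i, Finset.sum_const, Finset.card_univ,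
    Fintype.card_fin, nsmul_eq_mul]
  push_cast; ring

lemma B_rec (α : ℝ) (n k : ℕ) :
    Bb α (n + 1) k = Aa α n k + Bb α n k - α * Aa α n (k + 1) := by
  have hsplit := Finset.sum_filter_add_sum_filter_not (comps (k + 1) (n + 1))
    (fun f => f 0 = 1) (fun f => (f 0 : ℝ) * ∏ j, wgt α (f j))
  have h1 : ∑ f ∈ (comps (k + 1) (n + 1)).filter (fun f => f 0 = 1),
      (f 0 : ℝ) * ∏ j, wgt α (f j) = Aa α n k := by
    rw [Aa]
    refine Finset.sum_nbij' (i := fun f => Fin.tail f) (j := fun g => Fin.cons 1 g)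
      ?_ ?_ ?_ ?_ ?_
    · intro f hf
      rw [Finset.mem_filter, mem_comps] at hf
      obtain ⟨⟨hs, hp⟩, h0⟩ := hf
      rw [Fin.sum_univ_succ, h0] at hs
      refine mem_comps.2 ⟨?_, fun i => hp _⟩
      dsimp only [Fin.tail]
      omega
    · intro g hg
      rw [mem_comps] at hg
      rw [Finset.mem_filter, mem_comps]
      refine ⟨⟨?_, fun i => ?_⟩, rfl⟩
      · rw [Fin.sum_univ_succ]
        simp [hg.1]
        omega
      · refine Fin.cases ?_ (fun j => ?_) i <;> simp [hg.2 _]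
    · intro f hf
      rw [Finset.mem_filter] at hf
      conv_rhs => rw [← Fin.cons_self_tail f]
      rw [hf.2]
    · intro g _
      exact Fin.tail_cons _ _
    · intro f hf
      rw [Finset.mem_filter] at hf
      rw [Fin.prod_univ_succ, hf.2, wgt_one]
      simp [Fin.tail]
  have h2 : ∑ f ∈ (comps (k + 1) (n + 1)).filter (fun f => ¬ f 0 = 1),
      (f 0 : ℝ) * ∏ j, wgt α (f j)
      = ∑ g ∈ comps (k + 1) n, ((g 0 : ℝ) - α) * ∏ j, wgt α (g j) := by
    refine Finset.sum_nbij' (i := fun f => Function.update f 0 (f 0 - 1))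
      (j := fun g => Function.update g 0 (g 0 + 1)) ?_ ?_ ?_ ?_ ?_
    · intro f hf
      rw [Finset.mem_filter, mem_comps] at hf
      obtain ⟨⟨hs, hp⟩, h0⟩ := hf
      have hf2 : 2 ≤ f 0 := by have := hp 0; omega
      rw [Fin.sum_univ_succ] at hs
      refine mem_comps.2 ⟨?_, fun i => ?_⟩
      · rw [Fin.sum_univ_succ, Function.update_self]
        have hu : ∀ j : Fin k, Function.update f 0 (f 0 - 1) j.succ = f j.succ :=
          fun j => Function.update_of_ne (Fin.succ_ne_zero j) _ _
        rw [Finset.sum_congr rfl fun j _ => hu j]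
        omega
      · refine Fin.cases ?_ (fun j => ?_) i
        · rw [Function.update_self]; omega
        · rw [Function.update_of_ne (Fin.succ_ne_zero j)]; exact hp _
    · intro g hg
      rw [mem_comps] at hg
      obtain ⟨hs, hp⟩ := hg
      rw [Fin.sum_univ_succ] at hs
      rw [Finset.mem_filter, mem_comps]
      refine ⟨⟨?_, fun i => ?_⟩, ?_⟩
      · rw [Fin.sum_univ_succ, Function.update_self]
        have hu : ∀ j : Fin k, Function.update g 0 (g 0 + 1) j.succ = g j.succ :=
          fun j => Function.update_of_ne (Fin.succ_ne_zero j) _ _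
        rw [Finset.sum_congr rfl fun j _ => hu j]
        omega
      · refine Fin.cases ?_ (fun j => ?_) i
        · rw [Function.update_self]; omega
        · rw [Function.update_of_ne (Fin.succ_ne_zero j)]; exact hp _
      · rw [Function.update_self]
        have := hp 0; omega
    · intro f hf
      rw [Finset.mem_filter, mem_comps] at hf
      obtain ⟨⟨_, hp⟩, h0⟩ := hf
      have hf2 : 2 ≤ f 0 := by have := hp 0; omega
      simp only [Function.update_self, Function.update_idem]
      rw [show f 0 - 1 + 1 = f 0 by omega]
      exact Function.update_eq_self 0 f
    · intro g hg
      simp only [Function.update_self, Function.update_idem, Nat.add_sub_cancel]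
      exact Function.update_eq_self 0 g
    · intro f hf
      rw [Finset.mem_filter, mem_comps] at hf
      obtain ⟨⟨_, hp⟩, h0⟩ := hf
      have hf2 : 2 ≤ f 0 := by have := hp 0; omega
      obtain ⟨a, ha⟩ : ∃ a, f 0 = a + 1 := ⟨f 0 - 1, by omega⟩
      have ha1 : 1 ≤ a := by omega
      rw [Fin.prod_univ_succ, Fin.prod_univ_succ]
      have hupd : ∀ j : Fin k, Function.update f 0 (f 0 - 1) j.succ = f j.succ :=
        fun j => Function.update_of_ne (Fin.succ_ne_zero j) _ _
      rw [Finset.prod_congr rfl fun j _ => congrArg (wgt α) (hupd j)]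
      rw [Function.update_self, ha]
      rw [show a + 1 - 1 = a by omega, ← mul_assoc, ← mul_assoc]
      congr 1
      have hw := wgt_succ α ha1
      push_cast at hw ⊢
      linarith [hw]
  rw [Bb, ← hsplit, h1, h2]
  rw [Finset.sum_congr rfl (fun g _ => sub_mul ((g 0 : ℝ)) α _), Finset.sum_sub_distrib]
  rw [← Bb, ← Finset.mul_sum, ← Aa]
  ring

lemma A_rec (α : ℝ) (n k : ℕ) :
    ((n : ℝ) + 1) * Aa α (n + 1) (k + 1)
      = ((k : ℝ) + 1) * Aa α n k + ((n : ℝ) - ((k : ℝ) + 1) * α) * Aa α n (k + 1) := by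
  have h1 := A_eq_B α (n + 1) k
  have h2 := B_rec α n k
  have h3 := A_eq_B α n k
  push_cast at h1
  rw [h1, h2]
  ring_nf
  ring_nf at h3
  linarith [h3]

lemma gs_rec (α : ℝ) (n k : ℕ) :
    genStirling α (n + 1) (k + 1)
      = genStirling α n k + ((n : ℝ) - ((k : ℝ) + 1) * α) * genStirling α n (k + 1) := by
  have h := A_rec α n k
  have hn1 : ((n : ℝ) + 1) ≠ 0 := by positivity
  have e : Aa α (n + 1) (k + 1)
      = (((k:ℝ)+1) * Aa α n k + ((n:ℝ) - ((k:ℝ)+1)*α) * Aa α n (k+1)) / ((n:ℝ)+1) := by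
    field_simp
    linarith [h]
  have hkf : ((k.factorial : ℝ)) ≠ 0 := Nat.cast_ne_zero.2 k.factorial_ne_zero
  simp only [genStirling_eq, Nat.factorial_succ, e]
  push_cast
  field_simp

lemma comps_eq_empty {k n : ℕ} (h : n < k) : comps k n = ∅ :=
  Finset.eq_empty_of_forall_notMem fun f hf => by
    obtain ⟨hs, hp⟩ := mem_comps.1 hf
    have h1 : ∑ _i : Fin k, 1 ≤ ∑ i, f i := Finset.sum_le_sum fun i _ => hp i
    simp at h1
    omega

lemma gs_of_lt (α : ℝ) {n k : ℕ} (h : n < k) : genStirling α n k = 0 := by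
  rw [genStirling_eq, Aa, comps_eq_empty h, Finset.sum_empty, mul_zero]

lemma gs_zero_zero (α : ℝ) : genStirling α 0 0 = 1 := by
  have h : comps 0 0 = {![]} := by
    refine Finset.eq_singleton_iff_unique_mem.2 ⟨mem_comps.2 ⟨by simp, fun i => i.elim0⟩, ?_⟩
    intro f _
    funext i
    exact i.elim0
  rw [genStirling_eq, Aa, h]
  simp

lemma gs_succ_zero (α : ℝ) (n : ℕ) : genStirling α (n + 1) 0 = 0 := by
  have h : comps 0 (n + 1) = ∅ :=
    Finset.eq_empty_of_forall_notMem fun f hf => by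
      obtain ⟨hs, _⟩ := mem_comps.1 hf
      simp at hs
  rw [genStirling_eq, Aa, h, Finset.sum_empty, mul_zero]

lemma key_identity (α x : ℝ) (n : ℕ) :
    ∑ k ∈ Finset.range (n + 1), genStirling α n k * risefac x α k = risefac x 1 n := by
  induction n with
  | zero => simp [gs_zero_zero, risefac_zero]
  | succ n ih =>
    have hT : ∑ k ∈ Finset.range (n + 1),
          ((n : ℝ) - ((k : ℝ) + 1) * α) * genStirling α n (k + 1) * risefac x α (k + 1)
        = ∑ k ∈ Finset.range (n + 1),
          ((n : ℝ) - (k : ℝ) * α) * genStirling α n k * risefac x α k := by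
      rw [Finset.sum_range_succ, Finset.sum_range_succ']
      rw [gs_of_lt α (Nat.lt_succ_self n)]
      have hz : ((n : ℝ) - (0 : ℕ) * α) * genStirling α n 0 * risefac x α 0 = 0 := by
        cases n with
        | zero => simp
        | succ m => rw [gs_succ_zero]; ring
      rw [hz]
      push_cast
      ring_nf
      simp
      exact Finset.sum_congr rfl fun i _ => by ring
    rw [Finset.sum_range_succ' _ (n + 1), gs_succ_zero]
    have hstep : ∀ k ∈ Finset.range (n + 1),
        genStirling α (n + 1) (k + 1) * risefac x α (k + 1)
          = genStirling α n k * risefac x α (k + 1)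
            + ((n : ℝ) - ((k : ℝ) + 1) * α) * genStirling α n (k + 1) * risefac x α (k + 1) := by
      intro k _
      rw [gs_rec]
      ring
    rw [Finset.sum_congr rfl hstep, Finset.sum_add_distrib, hT]
    have : ∀ k ∈ Finset.range (n + 1),
        genStirling α n k * risefac x α (k + 1)
          + ((n : ℝ) - (k : ℝ) * α) * genStirling α n k * risefac x α k
        = genStirling α n k * risefac x α k * (x + n) := by
      intro k _
      rw [risefac_succ]
      ring
    rw [← Finset.sum_add_distrib, Finset.sum_congr rfl this, ← Finset.sum_mul, ih,
      risefac_succ]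
    ring

end Auxiliary

/-- Under the Poisson–Dirichlet weights, the distribution of the number of observations in
new blocks specializes:
`(1/V(n,k)) binom(m,s) (n−kα)_{m−s↑} ∑_{k*=0}^s V(n+m,k+k*) S_{s,k*}^{-1,-α}
  = binom(m,s) (n−kα)_{m−s↑} (θ+kα)_{s↑} / (θ+n)_{m↑}`. -/
theorem pd_new_observations_dist (α θ : ℝ) (hα0 : 0 < α) (hα1 : α < 1) (hθ : -α < θ)
    (n k : ℕ) (hk : 1 ≤ k) (hkn : k ≤ n) (s m : ℕ) (hsm : s ≤ m) :
    (1 / pdV α θ n k) * (m.choose s : ℝ) * risefac ((n : ℝ) - k * α) 1 (m - s) *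
        ∑ kstar ∈ Finset.range (s + 1), pdV α θ (n + m) (k + kstar) * genStirling α s kstar
      = (m.choose s : ℝ) * risefac ((n : ℝ) - k * α) 1 (m - s) *
          risefac (θ + k * α) 1 s / risefac (θ + n) 1 m := by
  have hn1 : 1 ≤ n := le_trans hk hkn
  have hθ1 : 0 < θ + 1 := by linarith
  have hθα : 0 < θ + α := by linarith
  have hP1 : 0 < risefac (θ + 1) 1 (n - 1) := risefac_pos hθ1 zero_le_one _
  have hP2 : 0 < risefac (θ + α) α (k - 1) := risefac_pos hθα hα0.le _
  have hθn : 0 < θ + n := by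
    have h1 : (1 : ℝ) ≤ n := by exact_mod_cast hn1
    linarith
  have hQ : 0 < risefac (θ + n) 1 m := risefac_pos hθn zero_le_one _
  have hsplitQ : risefac (θ + 1) 1 (n + m - 1)
      = risefac (θ + 1) 1 (n - 1) * risefac (θ + n) 1 m := by
    rw [show n + m - 1 = (n - 1) + m from by omega, risefac_add_s18]
    congr 2
    rw [Nat.cast_sub hn1]
    push_cast
    ring
  have hpdV : ∀ kstar : ℕ, pdV α θ (n + m) (k + kstar)
      = risefac (θ + α) α (k - 1) * risefac (θ + k * α) α kstar /
          (risefac (θ + 1) 1 (n - 1) * risefac (θ + n) 1 m) := by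
    intro kstar
    rw [pdV, hsplitQ, show k + kstar - 1 = (k - 1) + kstar from by omega, risefac_add_s18]
    have harg : θ + α + ((k - 1 : ℕ) : ℝ) * α = θ + k * α := by
      rw [Nat.cast_sub hk]
      push_cast
      ring
    rw [harg]
  have hsum : (∑ kstar ∈ Finset.range (s + 1),
        pdV α θ (n + m) (k + kstar) * genStirling α s kstar)
      = risefac (θ + α) α (k - 1) /
          (risefac (θ + 1) 1 (n - 1) * risefac (θ + n) 1 m) * risefac (θ + k * α) 1 s := by
    rw [← key_identity α (θ + k * α) s, Finset.mul_sum]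
    refine Finset.sum_congr rfl fun kstar _ => ?_
    rw [hpdV kstar]
    ring
  rw [hsum, pdV]
  field_simp
end
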